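/- Let L be a finite join-semidistributive lattice whose canonical join complex is flag. Then the Möbius function of L takes only the values -1, 0, and 1: for all x ≤ y in L, μ(x, y) ∈ {-1, 0, 1}. -/

import Mathlib

universe u v

def JoinSemidistrib (α : Type*) [Lattice α] : Prop :=
  ∀ x y z : α, x ⊔ y = x ⊔ z → x ⊔ (y ⊓ z) = x ⊔ y

def MeetSemidistrib (α : Type*) [Lattice α] : Prop :=
  ∀ x y z : α, x ⊓ y = x ⊓ z → x ⊓ (y ⊔ z) = x ⊓ y

section JoinDefs

variable {α : Type*} [Lattice α] [OrderBot α]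

/-- `j` is join-irreducible: not the bottom element, and `j = a ⊔ b` implies `j = a` or `j = b`. -/
def JoinIrred (j : α) : Prop :=
  j ≠ ⊥ ∧ ∀ a b : α, j = a ⊔ b → j = a ∨ j = b

/-- `A` join-refines `B`: every element of `A` is below some element of `B`. -/
def JoinRefines (A B : Finset α) : Prop :=
  ∀ a ∈ A, ∃ b ∈ B, a ≤ b

/-- `A` is an irredundant join representation of `w`. -/
def IrredJoinRep (A : Finset α) (w : α) : Prop :=
  A.sup id = w ∧ ∀ A' ⊂ A, A'.sup id < w

/-- `A` is the canonical join representation of `w`: the irredundant join representation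
of `w` that join-refines every irredundant join representation of `w`. -/
def CanonicalJoinRep (A : Finset α) (w : α) : Prop :=
  IrredJoinRep A w ∧ ∀ B : Finset α, IrredJoinRep B w → JoinRefines A B

/-- `A` joins canonically, i.e. `A` is a face of the canonical join complex. -/
def JoinsCanonically (A : Finset α) : Prop :=
  CanonicalJoinRep A (A.sup id)

/-- `j` is a canonical joinand of `w`. -/
def CanonicalJoinand (j w : α) : Prop :=
  ∃ A : Finset α, CanonicalJoinRep A w ∧ j ∈ A

end JoinDefs

/-- The canonical join complex is flag: any finite set of join-irreducible elements all of
whose two-element subsets are faces is itself a face. -/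
def FlagCanonicalJoinComplex (α : Type*) [Lattice α] [OrderBot α] [DecidableEq α] : Prop :=
  ∀ F : Finset α, (∀ j ∈ F, JoinIrred j) →
    (∀ j ∈ F, ∀ j' ∈ F, j ≠ j' → JoinsCanonically ({j, j'} : Finset α)) →
    JoinsCanonically F

/-- A lattice is crosscut-simplicial if for every `x ≤ y` and every proper subset `S` of the
set of atoms of the interval `[x, y]` (elements `a` with `x ⋖ a` and `a ≤ y`), the join of `x`
with all elements of `S` is strictly less than `y`. -/
def CrosscutSimplicial (β : Type*) [Lattice β] : Prop :=
  ∀ x y : β, x ≤ y → ∀ S : Finset β,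
    (∀ a ∈ S, x ⋖ a ∧ a ≤ y) →
    (∃ a : β, (x ⋖ a ∧ a ≤ y) ∧ a ∉ S) →
    S.fold (· ⊔ · : β → β → β) x id < y

section CrosscutProof

open Finset

open scoped Classical

variable {α : Type*} [Lattice α] [OrderBot α] [Fintype α] [DecidableEq α]

lemma sup_lt_of_joinIrred {j : α} (hj : JoinIrred j) (s : Finset α)
    (hs : ∀ v ∈ s, v < j) : s.sup id < j := by
  induction s using Finset.induction_on with
  | empty => simpa using bot_lt_iff_ne_bot.2 hj.1
  | @insert a s _ ih =>
      have haj : a < j := hs a (mem_insert_self a s)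
      have hrest : s.sup id < j := ih (fun v hv => hs v (mem_insert_of_mem hv))
      rw [sup_insert]
      have hle : id a ⊔ s.sup id ≤ j := sup_le haj.le hrest.le
      rcases hle.lt_or_eq with h | h
      · exact h
      · rcases hj.2 _ _ h.symm with h1 | h1
        · exact absurd h1 haj.ne'
        · exact absurd h1 hrest.ne'

noncomputable def jstar (j : α) : α := (Finset.univ.filter (· < j)).sup id

lemma le_jstar {v j : α} (h : v < j) : v ≤ jstar j :=
  le_sup (f := id) (by simpa using h)

lemma jstar_lt {j : α} (hj : JoinIrred j) : jstar j < j :=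
  sup_lt_of_joinIrred hj _ (fun v hv => (mem_filter.1 hv).2)

/-- `bet m w` : the minimum element `v` with `v ⊔ m = w` (in a finite JSD lattice). -/
noncomputable def bet (m w : α) : α :=
  if h : ((Finset.univ.filter (fun v => v ⊔ m = w)) : Finset α).Nonempty then
    (Finset.univ.filter (fun v => v ⊔ m = w)).inf' h id
  else ⊥

lemma K_nonempty {m w : α} (hmw : m ≤ w) :
    ((Finset.univ.filter (fun v => v ⊔ m = w)) : Finset α).Nonempty :=
  ⟨w, by simp [sup_eq_left.2 hmw]⟩

lemma inf'_K (hjsd : JoinSemidistrib α) {m w : α} :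
    ∀ (s : Finset α) (hne : s.Nonempty), (∀ v ∈ s, v ⊔ m = w) → (s.inf' hne id) ⊔ m = w := by
  intro s
  induction s using Finset.cons_induction with
  | empty => intro h; exact absurd h (by simp)
  | cons a s ha ih =>
      intro _ hs
      rcases s.eq_empty_or_nonempty with rfl | hne
      · simpa using hs a (mem_cons_self a _)
      · have h1 : a ⊔ m = w := hs a (mem_cons_self a _)
        have h2 : s.inf' hne id ⊔ m = w := ih hne (fun v hv => hs v (mem_cons_of_mem hv))
        have h3 : m ⊔ a = m ⊔ s.inf' hne id := by
          rw [sup_comm m a, h1, sup_comm m _, h2]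
        have h4 := hjsd m a (s.inf' hne id) h3
        rw [inf'_cons hne]
        calc (id a ⊓ s.inf' hne id) ⊔ m = m ⊔ (a ⊓ s.inf' hne id) := sup_comm _ _
          _ = m ⊔ a := h4
          _ = a ⊔ m := sup_comm _ _
          _ = w := h1

lemma bet_sup (hjsd : JoinSemidistrib α) {m w : α} (hmw : m ≤ w) : bet m w ⊔ m = w := by
  rw [bet, dif_pos (K_nonempty hmw)]
  exact inf'_K hjsd _ _ (fun v hv => (mem_filter.1 hv).2)

lemma bet_le {m w v : α} (hv : v ⊔ m = w) : bet m w ≤ v := by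
  have hmw : m ≤ w := le_sup_right.trans hv.le
  rw [bet, dif_pos (K_nonempty hmw)]
  exact inf'_le _ (by simp [hv])

lemma bet_le_w (hjsd : JoinSemidistrib α) {m w : α} (hmw : m ≤ w) : bet m w ≤ w :=
  le_sup_left.trans (bet_sup hjsd hmw).le

lemma joinIrred_bet (hjsd : JoinSemidistrib α) {m w : α} (hcov : m ⋖ w) :
    JoinIrred (bet m w) := by
  have hsup : bet m w ⊔ m = w := bet_sup hjsd hcov.le
  have h008 : ∀ c : α, c ≤ bet m w → (c ⊔ m = m ∨ c ⊔ m = w) := by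
    intro c hc
    exact hcov.eq_or_eq (le_sup_right : m ≤ c ⊔ m)
      (sup_le (hc.trans (bet_le_w hjsd hcov.le)) hcov.le)
  constructor
  · intro h
    rw [h, bot_sup_eq] at hsup
    exact hcov.lt.ne hsup
  · intro a b hab
    have ha : a ≤ bet m w := by rw [hab]; exact le_sup_left
    have hb : b ≤ bet m w := by rw [hab]; exact le_sup_right
    rcases h008 a ha with h1 | h1
    · rcases h008 b hb with h2 | h2
      · exfalso
        have : bet m w ≤ m := hab.le.trans (sup_le (sup_eq_right.1 h1) (sup_eq_right.1 h2))
        rw [sup_eq_right.2 this] at hsup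
        exact hcov.lt.ne hsup
      · exact Or.inr (le_antisymm (bet_le h2) hb)
    · exact Or.inl (le_antisymm (bet_le h1) ha)

lemma jstar_bet_le (hjsd : JoinSemidistrib α) {m w : α} (hcov : m ⋖ w) :
    jstar (bet m w) ≤ m := by
  have hji := joinIrred_bet hjsd hcov
  have hlt : jstar (bet m w) < bet m w := jstar_lt hji
  rcases hcov.eq_or_eq (le_sup_right : m ≤ jstar (bet m w) ⊔ m)
      (sup_le (hlt.le.trans (bet_le_w hjsd hcov.le)) hcov.le) with h | h
  · exact sup_eq_right.1 h
  · exact absurd (bet_le h) hlt.not_ge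

lemma exists_covby_le {a b : α} (h : a < b) : ∃ m, a ≤ m ∧ m ⋖ b := by
  have hne : (Finset.univ.filter (fun z => a ≤ z ∧ z < b)).Nonempty :=
    ⟨a, by simp [h]⟩
  obtain ⟨m, hm, hmax⟩ := Finset.exists_maximal hne
  rw [mem_filter] at hm
  refine ⟨m, hm.2.1, hm.2.2, fun c hmc hcb => ?_⟩
  exact hmc.not_ge (hmax (mem_filter.2 ⟨mem_univ c, hm.2.1.trans hmc.le, hcb⟩) hmc.le)

lemma exists_atom_le {a b : α} (h : a < b) : ∃ c, a ⋖ c ∧ c ≤ b := by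
  have hne : (Finset.univ.filter (fun z => a < z ∧ z ≤ b)).Nonempty :=
    ⟨b, by simp [h]⟩
  obtain ⟨c, hc, hmin⟩ := Finset.exists_minimal hne
  rw [mem_filter] at hc
  refine ⟨c, ⟨hc.2.1, fun t hat htc => ?_⟩, hc.2.2⟩
  exact htc.not_ge (hmin (mem_filter.2 ⟨mem_univ t, hat, htc.le.trans hc.2.2⟩) htc.le)

/-- The canonical join representation candidate: β applied to all lower covers. -/
noncomputable def Gam (w : α) : Finset α :=
  (Finset.univ.filter (· ⋖ w)).image (fun m => bet m w)

lemma mem_Gam {g w : α} : g ∈ Gam w ↔ ∃ m, m ⋖ w ∧ g = bet m w := by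
  simp only [Gam, mem_image, mem_filter, mem_univ, true_and]
  constructor
  · rintro ⟨m, hm, rfl⟩; exact ⟨m, hm, rfl⟩
  · rintro ⟨m, hm, rfl⟩; exact ⟨m, hm, rfl⟩

lemma gam_le_w (hjsd : JoinSemidistrib α) {g w : α} (hg : g ∈ Gam w) : g ≤ w := by
  obtain ⟨m, hm, rfl⟩ := mem_Gam.1 hg
  exact bet_le_w hjsd hm.le

lemma gam_sup (hjsd : JoinSemidistrib α) (w : α) : (Gam w).sup id = w := by
  have hle : (Gam w).sup id ≤ w := Finset.sup_le (fun g hg => gam_le_w hjsd hg)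
  rcases hle.lt_or_eq with h | h
  · exfalso
    obtain ⟨m, hsm, hcov⟩ := exists_covby_le h
    have hmem : bet m w ∈ Gam w := mem_Gam.2 ⟨m, hcov, rfl⟩
    have : bet m w ≤ m := (le_sup (f := id) hmem).trans hsm
    have hw : bet m w ⊔ m = w := bet_sup hjsd hcov.le
    rw [sup_eq_right.2 this] at hw
    exact hcov.lt.ne hw
  · exact h

lemma gam_refines (hjsd : JoinSemidistrib α) {w : α} (B : Finset α) (hB : B.sup id = w)
    {g : α} (hg : g ∈ Gam w) : ∃ b ∈ B, g ≤ b := by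
  obtain ⟨m, hcov, rfl⟩ := mem_Gam.1 hg
  by_contra hcon
  push_neg at hcon
  have hbm : ∀ b ∈ B, b ≤ m := by
    intro b hb
    have hbw : b ≤ w := hB ▸ le_sup (f := id) hb
    rcases hcov.eq_or_eq (le_sup_right : m ≤ b ⊔ m) (sup_le hbw hcov.le) with h | h
    · exact sup_eq_right.1 h
    · exact absurd (bet_le h) (hcon b hb)
  have : w ≤ m := hB ▸ Finset.sup_le hbm
  exact hcov.lt.not_ge this

lemma gam_not_le (hjsd : JoinSemidistrib α) {m m' w : α} (hm : m ⋖ w) (hm' : m' ⋖ w)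
    (hne : m ≠ m') : ¬ bet m w ≤ bet m' w := by
  have hsup : m ⊔ m' = w := by
    rcases hm'.eq_or_eq (le_sup_right : m' ≤ m ⊔ m') (sup_le hm.le hm'.le) with h | h
    · exfalso
      have hmm' : m ≤ m' := le_sup_left.trans h.le
      rcases hm.eq_or_eq hmm' hm'.le with h1 | h1
      · exact hne h1.symm
      · exact hm'.lt.ne h1
    · exact h
  have h1 : bet m' w ≤ m := bet_le hsup
  intro hle
  have : bet m w ≤ m := hle.trans h1
  have hw : bet m w ⊔ m = w := bet_sup hjsd hm.le
  rw [sup_eq_right.2 this] at hw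
  exact hm.lt.ne hw

lemma gam_ssubset_sup_lt (hjsd : JoinSemidistrib α) {w : α} {A : Finset α}
    (hA : A ⊂ Gam w) : A.sup id < w := by
  have hle : A.sup id ≤ w := Finset.sup_le (fun g hg => gam_le_w hjsd (hA.subset hg))
  rcases hle.lt_or_eq with h | h
  · exact h
  exfalso
  obtain ⟨g, hgG, hgA⟩ := Finset.exists_of_ssubset hA
  obtain ⟨m, hcov, rfl⟩ := mem_Gam.1 hgG
  by_cases hall : ∀ b ∈ A, b ≤ m
  · have : w ≤ m := h ▸ Finset.sup_le hall
    exact hcov.lt.not_ge this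
  · push_neg at hall
    obtain ⟨b, hb, hbm⟩ := hall
    have hbw : b ≤ w := gam_le_w hjsd (hA.subset hb)
    rcases hcov.eq_or_eq (le_sup_right : m ≤ b ⊔ m) (sup_le hbw hcov.le) with h1 | h1
    · exact hbm (sup_eq_right.1 h1)
    · have hble : bet m w ≤ b := bet_le h1
      obtain ⟨m', hcov', rfl⟩ := mem_Gam.1 (hA.subset hb)
      have hmm' : m ≠ m' := by
        rintro rfl; exact hgA hb
      exact gam_not_le hjsd hcov hcov' hmm' hble

lemma gam_canonical (hjsd : JoinSemidistrib α) (w : α) : CanonicalJoinRep (Gam w) w := by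
  refine ⟨⟨gam_sup hjsd w, fun A' hA' => gam_ssubset_sup_lt hjsd hA'⟩, ?_⟩
  intro B hB g hg
  exact gam_refines hjsd B hB.1 hg

end CrosscutProof

section CrosscutProof2

open Finset

open scoped Classical

variable {α : Type*} [Lattice α] [OrderBot α] [Fintype α] [DecidableEq α]

lemma sup_eq_sup_erase {s : Finset α} {j : α} (hj : j ∈ s) :
    s.sup id = j ⊔ (s.erase j).sup id := by
  apply le_antisymm
  · apply Finset.sup_le
    intro b hb
    rcases eq_or_ne b j with rfl | hne
    · exact le_sup_left
    · exact le_sup_of_le_right (le_sup (f := id) (mem_erase.2 ⟨hne, hb⟩))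
  · exact sup_le (le_sup (f := id) hj) (Finset.sup_mono (erase_subset _ _))

lemma exists_irred_subrep {B : Finset α} {w : α} (hB : B.sup id = w) :
    ∃ B', B' ⊆ B ∧ IrredJoinRep B' w := by
  have hne : (B.powerset.filter (fun C => C.sup id = w)).Nonempty :=
    ⟨B, mem_filter.2 ⟨mem_powerset.2 (Finset.Subset.refl B), hB⟩⟩
  obtain ⟨B', hB', hmin⟩ := Finset.exists_minimal hne
  rw [mem_filter, mem_powerset] at hB'
  refine ⟨B', hB'.1, hB'.2, ?_⟩
  intro A' hA'
  have hle : A'.sup id ≤ w := hB'.2 ▸ Finset.sup_mono hA'.subset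
  rcases hle.lt_or_eq with h | h
  · exact h
  · exact absurd hA' (by
      intro hcon
      exact not_subset_of_ssubset hcon (hmin (mem_filter.2 ⟨mem_powerset.2 (hcon.subset.trans hB'.1), h⟩) hcon.subset))

lemma criterion_of_canonical {F : Finset α} {w : α} {j : α} (hji : JoinIrred j)
    (hF : CanonicalJoinRep F w) (hjF : j ∈ F) :
    ¬ j ≤ (F.erase j).sup id ⊔ jstar j := by
  intro hle
  have hw : F.sup id = w := hF.1.1
  set s := (F.erase j).sup id ⊔ jstar j with hs
  have hsw : s = w := by
    apply le_antisymm
    · apply sup_le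
      · exact hw ▸ Finset.sup_mono (erase_subset _ _)
      · exact (jstar_lt hji).le.trans (hw ▸ le_sup (f := id) hjF)
    · calc w = F.sup id := hw.symm
        _ = j ⊔ (F.erase j).sup id := sup_eq_sup_erase hjF
        _ ≤ s ⊔ (F.erase j).sup id := sup_le_sup_right hle _
        _ = s := sup_eq_left.2 le_sup_left
  have hBsup : (insert (jstar j) (F.erase j)).sup id = w := by
    rw [sup_insert, ← hsw, hs]
    exact sup_comm _ _
  obtain ⟨B', hB'sub, hirr⟩ := exists_irred_subrep hBsup
  obtain ⟨b, hbB', hjb⟩ := hF.2 B' hirr j hjF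
  rcases mem_insert.1 (hB'sub hbB') with rfl | hbe
  · exact absurd (hjb.trans_lt (jstar_lt hji)) (lt_irrefl j)
  · have hsupe : w ≤ (F.erase j).sup id := by
      rw [← hw]
      apply Finset.sup_le
      intro a ha
      rcases eq_or_ne a j with rfl | hne
      · exact hjb.trans (le_sup (f := id) hbe)
      · exact le_sup (f := id) (mem_erase.2 ⟨hne, ha⟩)
    exact absurd hsupe (hF.1.2 (F.erase j) (erase_ssubset hjF)).not_ge

lemma canonical_of_criterion (hjsd : JoinSemidistrib α) (F : Finset α)
    (hji : ∀ j ∈ F, JoinIrred j)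
    (hcrit : ∀ j ∈ F, ¬ j ≤ (F.erase j).sup id ⊔ jstar j) :
    JoinsCanonically F := by
  set w := F.sup id with hw
  have hsub : F ⊆ Gam w := by
    intro j hj
    set s := (F.erase j).sup id ⊔ jstar j with hs
    have hjs : ¬ j ≤ s := hcrit j hj
    have hjw : j ≤ w := hw ▸ le_sup (f := id) hj
    have hsw : s ≤ w := sup_le (hw ▸ Finset.sup_mono (erase_subset _ _))
      ((jstar_lt (hji j hj)).le.trans hjw)
    have hsj : s ⊔ j = w := by
      apply le_antisymm (sup_le hsw hjw)
      calc w = F.sup id := hw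
        _ = j ⊔ (F.erase j).sup id := sup_eq_sup_erase hj
        _ ≤ j ⊔ s := sup_le_sup_left le_sup_left _
        _ = s ⊔ j := sup_comm _ _
    have hslt : s < w := lt_of_le_of_ne hsw (fun h => hjs (h ▸ hjw))
    obtain ⟨m, hsm, hcov⟩ := exists_covby_le hslt
    have hjm : j ⊔ m = w := by
      apply le_antisymm (sup_le hjw hcov.le)
      calc w = s ⊔ j := hsj.symm
        _ ≤ m ⊔ j := sup_le_sup_right hsm j
        _ = j ⊔ m := sup_comm _ _
    have hb : bet m w ≤ j := bet_le hjm
    rcases hb.lt_or_eq with hlt | heq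
    · exfalso
      have hjsm : jstar j ≤ m := (le_sup_right : jstar j ≤ s).trans hsm
      have h1 : bet m w ≤ m := (le_jstar hlt).trans hjsm
      have hwm : bet m w ⊔ m = w := bet_sup hjsd hcov.le
      rw [sup_eq_right.2 h1] at hwm
      exact hcov.lt.ne hwm
    · exact mem_Gam.2 ⟨m, hcov, heq.symm⟩
  have heqF : F = Gam w := by
    by_contra hne
    have h1 : F ⊂ Gam w := Finset.ssubset_iff_subset_ne.2 ⟨hsub, hne⟩
    have h2 := gam_ssubset_sup_lt hjsd h1
    rw [← hw] at h2
    exact lt_irrefl w h2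
  show CanonicalJoinRep F w
  rw [heqF]
  exact gam_canonical hjsd w

lemma gam_crit (hjsd : JoinSemidistrib α) {w g v : α} (hg : g ∈ Gam w) (hv : v ≤ w)
    (hgv : ¬ g ≤ v) : ¬ g ≤ v ⊔ jstar g := by
  obtain ⟨m, hcov, rfl⟩ := mem_Gam.1 hg
  intro hle
  have h1 : jstar (bet m w) ≤ m := jstar_bet_le hjsd hcov
  have h2 : v ⊔ m = w := by
    apply le_antisymm (sup_le hv hcov.le)
    calc w = bet m w ⊔ m := (bet_sup hjsd hcov.le).symm
      _ ≤ (v ⊔ jstar (bet m w)) ⊔ m := sup_le_sup_right hle m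
      _ = v ⊔ (jstar (bet m w) ⊔ m) := sup_assoc _ _ _
      _ = v ⊔ m := by rw [sup_eq_right.2 h1]
  exact hgv (bet_le h2)

lemma fold_sup_eq (s : Finset α) (b : α) : s.fold (· ⊔ · : α → α → α) b id = b ⊔ s.sup id := by
  induction s using Finset.cons_induction with
  | empty => simp
  | cons a s ha ih =>
      rw [fold_cons, ih, sup_cons]
      exact sup_left_comm _ _ _

theorem crosscut_of_flag (hjsd : JoinSemidistrib α)
    (hflag : FlagCanonicalJoinComplex α) : CrosscutSimplicial α := by
  intro x y hxy S hS hex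
  obtain ⟨c, ⟨hxc, hcy⟩, hcS⟩ := hex
  rw [fold_sup_eq]
  have hle : x ⊔ S.sup id ≤ y := sup_le hxy (Finset.sup_le fun a ha => (hS a ha).2)
  rcases hle.lt_or_eq with h | hy
  · exact h
  exfalso
  -- Notation
  set jc := bet x c with hjc
  have f1 : jc ⊔ x = c := bet_sup hjsd hxc.le
  have f2 : ¬ jc ≤ x := by
    intro h
    rw [sup_eq_right.2 h] at f1
    exact hxc.lt.ne f1
  have f3 : jstar jc ≤ x := jstar_bet_le hjsd hxc
  have f4 : jc ≤ y := (le_sup_left.trans f1.le).trans hcy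
  have f5 : ∀ a ∈ S, bet x a ⊔ x = a := fun a ha => bet_sup hjsd (hS a ha).1.le
  have haux : ∀ a ∈ S, ¬ jc ≤ bet x a ⊔ jstar jc := by
    intro a ha hcon
    have hja : bet x a ⊔ jstar jc ≤ a :=
      sup_le (le_sup_left.trans (f5 a ha).le) (f3.trans (le_sup_right.trans (f5 a ha).le))
    have hca : c ≤ a := by
      have hh : jc ⊔ x ≤ a := sup_le (hcon.trans hja) (le_sup_right.trans (f5 a ha).le)
      rw [f1] at hh
      exact hh
    rcases (hS a ha).1.eq_or_eq hxc.lt.le hca with h | h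
    · exact hxc.lt.ne' h
    · exact hcS (h ▸ ha)
  set B0 : Finset α := insert x (S.image (fun a => bet x a)) with hB0def
  have hB0 : B0.sup id = y := by
    rw [hB0def, sup_insert]
    apply le_antisymm
    · apply sup_le hxy
      apply Finset.sup_le
      intro b hb
      obtain ⟨a, ha, rfl⟩ := mem_image.1 hb
      exact (le_sup_left.trans (f5 a ha).le).trans (hS a ha).2
    · rw [← hy]
      apply sup_le
      · exact le_sup_left
      · apply Finset.sup_le
        intro a ha
        calc (id a : α) = bet x a ⊔ x := (f5 a ha).symm
          _ ≤ (S.image (fun a => bet x a)).sup id ⊔ x :=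
              sup_le_sup_right (le_sup (f := id) (mem_image_of_mem (fun a => bet x a) ha)) x
          _ = id x ⊔ (S.image (fun a => bet x a)).sup id := sup_comm _ _
  have hrefB0 : ∀ g ∈ Gam y, g ≤ x ∨ ∃ a ∈ S, g ≤ bet x a := by
    intro g hg
    obtain ⟨b, hb, hgb⟩ := gam_refines hjsd B0 hB0 hg
    rcases mem_insert.1 hb with rfl | hb'
    · exact Or.inl hgb
    · obtain ⟨a, ha, rfl⟩ := mem_image.1 hb'
      exact Or.inr ⟨a, ha, hgb⟩
  have hjc_notin : jc ∉ Gam y := by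
    intro h
    rcases hrefB0 jc h with h1 | ⟨a, ha, h1⟩
    · exact f2 h1
    · exact haux a ha (h1.trans le_sup_left)
  set W : Finset α := insert jc ((Gam y).filter (fun g => ¬ g ≤ jc)) with hW
  have hWerase : W.erase jc = (Gam y).filter (fun g => ¬ g ≤ jc) := by
    rw [hW]
    apply erase_insert
    intro hcon
    exact hjc_notin (mem_filter.1 hcon).1
  have hji_all : ∀ j ∈ W, JoinIrred j := by
    intro j hj
    rcases mem_insert.1 hj with rfl | hj'
    · exact joinIrred_bet hjsd hxc
    · obtain ⟨m, hcov, rfl⟩ := mem_Gam.1 (mem_filter.1 hj').1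
      exact joinIrred_bet hjsd hcov
  have hpairgood : ∀ j ∈ W, ∀ j' ∈ W, j ≠ j' → ¬ j ≤ j' ⊔ jstar j := by
    intro j hj j' hj' hne
    rcases mem_insert.1 hj with rfl | hjf
    · rcases mem_insert.1 hj' with rfl | hj'f
      · exact absurd rfl hne
      · have hg := mem_filter.1 hj'f
        rcases hrefB0 j' hg.1 with h1 | ⟨a, ha, h1⟩
        · intro hcon
          exact f2 (hcon.trans (sup_le h1 f3))
        · intro hcon
          exact haux a ha (hcon.trans (sup_le_sup_right h1 _))
    · have hgmem := mem_filter.1 hjf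
      rcases mem_insert.1 hj' with rfl | hj'f
      · exact gam_crit hjsd hgmem.1 f4 hgmem.2
      · have hg'mem := mem_filter.1 hj'f
        obtain ⟨m, hcov, hjeq⟩ := mem_Gam.1 hgmem.1
        obtain ⟨m', hcov', hj'eq⟩ := mem_Gam.1 hg'mem.1
        have hmm' : m ≠ m' := by
          rintro rfl
          exact hne (hjeq.trans hj'eq.symm)
        have hnle : ¬ j ≤ j' := by
          rw [hjeq, hj'eq]
          exact gam_not_le hjsd hcov hcov' hmm'
        exact gam_crit hjsd hgmem.1 (gam_le_w hjsd hg'mem.1) hnle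
  have hpairs : ∀ j ∈ W, ∀ j' ∈ W, j ≠ j' → JoinsCanonically ({j, j'} : Finset α) := by
    intro j hj j' hj' hne
    apply canonical_of_criterion hjsd
    · intro k hk
      rcases mem_insert.1 hk with rfl | hk'
      · exact hji_all k hj
      · rw [mem_singleton.1 hk']
        exact hji_all j' hj'
    · intro k hk
      rcases mem_insert.1 hk with rfl | hk'
      · rw [erase_insert (notMem_singleton.2 hne), sup_singleton]
        simp only [id_eq]
        exact hpairgood k hj j' hj' hne
      · rw [mem_singleton.1 hk']
        have hrw : ({j, j'} : Finset α).erase j' = {j} := by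
          rw [pair_comm, erase_insert (notMem_singleton.2 hne.symm)]
        rw [hrw, sup_singleton]
        simp only [id_eq]
        exact hpairgood j' hj' j hj hne.symm
  have hWcan : CanonicalJoinRep W (W.sup id) := hflag W hji_all hpairs
  have hcritW := criterion_of_canonical (hji_all jc (mem_insert_self _ _)) hWcan
      (mem_insert_self _ _)
  apply hcritW
  have hyle : y ≤ (W.erase jc).sup id ⊔ jstar jc := by
    rw [← gam_sup hjsd y]
    apply Finset.sup_le
    intro g hg
    by_cases hgjc : g ≤ jc
    · have hglt : g < jc := lt_of_le_of_ne hgjc (by rintro rfl; exact hjc_notin hg)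
      exact ((le_jstar hglt).trans le_sup_right : id g ≤ _)
    · exact le_sup_of_le_left (le_sup (f := id)
        (by rw [hWerase]; exact mem_filter.2 ⟨hg, hgjc⟩))
  exact f4.trans hyle

end CrosscutProof2

section MoebiusPart

open Finset

open scoped Classical

variable {α : Type*} [Lattice α] [OrderBot α] [Fintype α] [DecidableEq α]

noncomputable def Atoms (x y : α) : Finset α :=
  Finset.univ.filter (fun a => x ⋖ a ∧ a ≤ y)

lemma mem_Atoms {x y a : α} : a ∈ Atoms x y ↔ x ⋖ a ∧ a ≤ y := by
  simp [Atoms]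

lemma atoms_closed (hcs : CrosscutSimplicial α) {x y : α}
    {s : Finset α} (hs : s ⊆ Atoms x y) :
    Atoms x (x ⊔ s.sup id) = s := by
  have hsle : ∀ a ∈ s, a ≤ x ⊔ s.sup id :=
    fun a ha => (le_sup (f := id) ha).trans le_sup_right
  apply Finset.Subset.antisymm
  · intro a ha
    rw [mem_Atoms] at ha
    by_contra has
    have h := hcs x (x ⊔ s.sup id) le_sup_left s
      (fun b hb => ⟨(mem_Atoms.1 (hs hb)).1, hsle b hb⟩)
      ⟨a, ⟨ha.1, ha.2⟩, has⟩
    rw [fold_sup_eq] at h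
    exact lt_irrefl _ h
  · intro a ha
    exact mem_Atoms.2 ⟨(mem_Atoms.1 (hs ha)).1, hsle a ha⟩

lemma atoms_sup_le {x y : α} (hxy : x ≤ y) {s : Finset α} (hs : s ⊆ Atoms x y) :
    x ⊔ s.sup id ≤ y :=
  sup_le hxy (Finset.sup_le fun a ha => (mem_Atoms.1 (hs ha)).2)

lemma atoms_x_eq (x : α) : Atoms x x = ∅ := by
  ext a
  simp only [mem_Atoms, notMem_empty, iff_false]
  rintro ⟨h1, h2⟩
  exact h1.lt.not_ge h2

lemma atoms_nonempty {x y : α} (h : x < y) : (Atoms x y).Nonempty := by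
  obtain ⟨c, h1, h2⟩ := exists_atom_le h
  exact ⟨c, mem_Atoms.2 ⟨h1, h2⟩⟩

lemma moebius_formula (hcs : CrosscutSimplicial α)
    (μ : α → α → ℤ) (hrefl : ∀ x : α, μ x x = 1)
    (hrec : ∀ x y : α, x < y →
      ∑ z ∈ Finset.univ.filter (fun z : α => x ≤ z ∧ z ≤ y), μ x z = 0)
    (x : α) :
    ∀ y : α, x ≤ y →
      μ x y = if y = x ⊔ (Atoms x y).sup id then (-1 : ℤ) ^ (Atoms x y).card else 0 := by
  intro y0
  refine WellFounded.induction (wellFounded_lt (α := α))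
    (C := fun y => x ≤ y →
      μ x y = if y = x ⊔ (Atoms x y).sup id then (-1 : ℤ) ^ (Atoms x y).card else 0) y0 ?_
  intro y IH hxy
  rcases eq_or_lt_of_le hxy with heq | hlt
  · subst heq
    rw [atoms_x_eq]
    simp [hrefl]
  · have hsum := hrec x y hlt
    have hsplit : Finset.univ.filter (fun z : α => x ≤ z ∧ z ≤ y)
        = insert y (Finset.univ.filter (fun z : α => x ≤ z ∧ z < y)) := by
      ext z
      simp only [mem_filter, mem_univ, true_and, mem_insert]
      constructor
      · rintro ⟨h1, h2⟩
        rcases h2.lt_or_eq with h3 | h3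
        · exact Or.inr ⟨h1, h3⟩
        · exact Or.inl h3
      · rintro (rfl | ⟨h1, h2⟩)
        · exact ⟨hlt.le, le_refl _⟩
        · exact ⟨h1, h2.le⟩
    have hyI : y ∉ Finset.univ.filter (fun z : α => x ≤ z ∧ z < y) := by simp
    rw [hsplit, sum_insert hyI] at hsum
    have hIH : ∀ z ∈ Finset.univ.filter (fun z : α => x ≤ z ∧ z < y),
        μ x z = if z = x ⊔ (Atoms x z).sup id then (-1 : ℤ) ^ (Atoms x z).card else 0 := by
      intro z hz
      rw [mem_filter] at hz
      exact IH z hz.2.2 hz.2.1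
    rw [Finset.sum_congr rfl hIH, ← Finset.sum_filter] at hsum
    have hbij : ∑ z ∈ (Finset.univ.filter (fun z : α => x ≤ z ∧ z < y)).filter
          (fun z => z = x ⊔ (Atoms x z).sup id), (-1 : ℤ) ^ (Atoms x z).card
        = ∑ s ∈ (Atoms x y).powerset.filter (fun s => x ⊔ s.sup id ≠ y),
            (-1 : ℤ) ^ s.card := by
      apply Finset.sum_nbij' (fun z => Atoms x z) (fun s => x ⊔ s.sup id)
      · intro z hz
        simp only [mem_filter, mem_univ, true_and] at hz
        obtain ⟨⟨hxz, hzy⟩, hcl⟩ := hz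
        have hsub : Atoms x z ⊆ Atoms x y := by
          intro a ha
          rw [mem_Atoms] at ha ⊢
          exact ⟨ha.1, ha.2.trans hzy.le⟩
        rw [mem_filter, mem_powerset]
        exact ⟨hsub, by rw [← hcl]; exact hzy.ne⟩
      · intro s hs
        rw [mem_filter, mem_powerset] at hs
        simp only [mem_filter, mem_univ, true_and]
        refine ⟨⟨le_sup_left, lt_of_le_of_ne (atoms_sup_le hlt.le hs.1) hs.2⟩, ?_⟩
        rw [atoms_closed hcs hs.1]
      · intro z hz
        simp only [mem_filter] at hz
        exact hz.2.symm
      · intro s hs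
        rw [mem_filter, mem_powerset] at hs
        exact atoms_closed hcs hs.1
      · intro z hz
        rfl
    rw [hbij] at hsum
    by_cases hcl : x ⊔ (Atoms x y).sup id = y
    · have hDeq : (Atoms x y).powerset.filter (fun s => x ⊔ s.sup id ≠ y)
          = (Atoms x y).powerset.erase (Atoms x y) := by
        ext s
        rw [mem_filter, mem_erase, mem_powerset]
        constructor
        · rintro ⟨h1, h2⟩
          refine ⟨?_, h1⟩
          rintro rfl
          exact h2 hcl
        · rintro ⟨h1, h2⟩
          refine ⟨h2, ?_⟩
          intro heq
          have hss : s ⊂ Atoms x y := HasSubset.Subset.ssubset_of_ne h2 h1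
          obtain ⟨a, haA, has⟩ := Finset.exists_of_ssubset hss
          rw [mem_Atoms] at haA
          have h := hcs x y hlt.le s
            (fun b hb => mem_Atoms.1 (h2 hb)) ⟨a, haA, has⟩
          rw [fold_sup_eq, heq] at h
          exact lt_irrefl _ h
      rw [hDeq] at hsum
      have hadd := Finset.sum_erase_add (Atoms x y).powerset
        (fun s => (-1 : ℤ) ^ s.card) (Finset.mem_powerset_self (Atoms x y))
      rw [Finset.sum_powerset_neg_one_pow_card,
        if_neg (atoms_nonempty hlt).ne_empty] at hadd
      rw [if_pos hcl.symm]
      linarith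
    · have hDeq : (Atoms x y).powerset.filter (fun s => x ⊔ s.sup id ≠ y)
          = (Atoms x y).powerset := by
        apply Finset.filter_true_of_mem
        intro s hs
        rw [mem_powerset] at hs
        intro heq
        apply hcl
        apply le_antisymm (atoms_sup_le hlt.le (Finset.Subset.refl _))
        calc y = x ⊔ s.sup id := heq.symm
          _ ≤ x ⊔ (Atoms x y).sup id := sup_le_sup_left (Finset.sup_mono hs) x
      rw [hDeq, Finset.sum_powerset_neg_one_pow_card,
        if_neg (atoms_nonempty hlt).ne_empty] at hsum
      rw [if_neg (fun h => hcl h.symm)]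
      linarith

end MoebiusPart


section MeetDefs

variable {α : Type*} [Lattice α] [OrderTop α]

/-- `m` is meet-irreducible: not the top element, and `m = a ⊓ b` implies `m = a` or `m = b`. -/
def MeetIrred (m : α) : Prop :=
  m ≠ ⊤ ∧ ∀ a b : α, m = a ⊓ b → m = a ∨ m = b

/-- `A` meet-refines `B`: every element of `A` is above some element of `B`. -/
def MeetRefines (A B : Finset α) : Prop :=
  ∀ a ∈ A, ∃ b ∈ B, b ≤ a

/-- `A` is an irredundant meet representation of `w`. -/
def IrredMeetRep (A : Finset α) (w : α) : Prop :=
  A.inf id = w ∧ ∀ A' ⊂ A, w < A'.inf id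

/-- `A` is the canonical meet representation of `w`. -/
def CanonicalMeetRep (A : Finset α) (w : α) : Prop :=
  IrredMeetRep A w ∧ ∀ B : Finset α, IrredMeetRep B w → MeetRefines A B

/-- `A` meets canonically, i.e. `A` is a face of the canonical meet complex. -/
def MeetsCanonically (A : Finset α) : Prop :=
  CanonicalMeetRep A (A.inf id)

end MeetDefs

/-- The canonical meet complex is flag. -/
def FlagCanonicalMeetComplex (α : Type*) [Lattice α] [OrderTop α] [DecidableEq α] : Prop :=
  ∀ F : Finset α, (∀ m ∈ F, MeetIrred m) →
    (∀ m ∈ F, ∀ m' ∈ F, m ≠ m' → MeetsCanonically ({m, m'} : Finset α)) →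
    MeetsCanonically F


open scoped Classical in
/-- Corollary (topology): if the canonical join complex of a finite join-semidistributive
lattice is flag, then the Möbius function takes only the values -1, 0, 1. -/
theorem stmt_2 {α : Type*} [Lattice α] [OrderBot α] [Fintype α] [DecidableEq α]
    (hjsd : JoinSemidistrib α) (hflag : FlagCanonicalJoinComplex α)
    (μ : α → α → ℤ) (hrefl : ∀ x : α, μ x x = 1)
    (hrec : ∀ x y : α, x < y →
      ∑ z ∈ Finset.univ.filter (fun z : α => x ≤ z ∧ z ≤ y), μ x z = 0) :
    ∀ x y : α, x ≤ y → μ x y ∈ ({-1, 0, 1} : Set ℤ) := by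
  intro x y hxy
  have hform := moebius_formula (crosscut_of_flag hjsd hflag) μ hrefl hrec x y hxy
  rw [hform]
  split_ifs with h
  · rcases Nat.even_or_odd (Atoms x y).card with he | ho
    · rw [Even.neg_one_pow he]; simp
    · rw [Odd.neg_one_pow ho]; simp
  · simp
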